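/- Suppose E : B → ℝ is a C² function on a ball B around 0 in a Hilbert space decomposed orthogonally as K₀ ⊕ K_±, with K₀ finite-dimensional, such that for b = b₀ + ℓ(b₀) + b_± one has the bounds ‖∇E(b)‖ ≥ c(‖∇g(b₀)‖ + ‖b_±‖) and |E(b)| ≤ |g(b₀)| + C‖b_±‖², where g(b₀) = E(b₀ + ℓ(b₀)) satisfies a Łojasiewicz inequality |g(b₀)|^{1−θ} ≤ c‖∇g(b₀)‖ with θ ∈ (0, 1/2). Then E satisfies the Łojasiewicz inequality |E(b)|^{1−θ} ≤ K ‖∇E(b)‖ for all sufficiently small b. -/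

import Mathlib

open scoped RealInnerProductSpace

lemma real_rpow_add_le_add_rpow {x y p : ℝ} (hx : 0 ≤ x) (hy : 0 ≤ y)
    (hp : 0 ≤ p) (hp1 : p ≤ 1) : (x + y) ^ p ≤ x ^ p + y ^ p := by
  lift x to NNReal using hx
  lift y to NNReal using hy
  have := NNReal.rpow_add_le_add_rpow x y hp hp1
  exact_mod_cast this

/-- Reduction of the Łojasiewicz inequality to the finite-dimensional kernel: if `E` is `C²`
on a ball around `0` in a Hilbert space `H = K₀ ⊕ K_±` (orthogonally, `K₀` finite
dimensional), each `b` decomposes as `b = b₀ + ℓ(b₀) + b_±`, and one has the bounds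
`‖∇E(b)‖ ≥ c (‖∇g(b₀)‖ + ‖b_±‖)` and `|E(b)| ≤ |g(b₀)| + C ‖b_±‖²` where
`g(b₀) = E(b₀ + ℓ(b₀))` satisfies the Łojasiewicz inequality `|g|^{1−θ} ≤ c' ‖∇g‖` with
`θ ∈ (0, 1/2)`, then `E` satisfies `|E(b)|^{1−θ} ≤ K ‖∇E(b)‖` for all sufficiently small `b`. -/
theorem stmt_7 {H : Type*} [NormedAddCommGroup H] [InnerProductSpace ℝ H] [CompleteSpace H]
    (K₀ Kpm : Submodule ℝ H) [FiniteDimensional ℝ K₀]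
    (horth : ∀ x ∈ K₀, ∀ y ∈ Kpm, ⟪x, y⟫ = 0) (hsum : K₀ ⊔ Kpm = ⊤)
    (r : ℝ) (hr : 0 < r)
    (E : H → ℝ) (hE : ContDiffOn ℝ 2 E (Metric.ball 0 r))
    (ℓ : K₀ → Kpm) (hℓ0 : ℓ 0 = 0)
    (g : K₀ → ℝ) (hg : ∀ v : K₀, g v = E ((v : H) + (ℓ v : H)))
    (b₀ : H → K₀) (bpm : H → Kpm)
    (hdecomp : ∀ b : H, b = (b₀ b : H) + (ℓ (b₀ b) : H) + (bpm b : H))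
    (θ : ℝ) (hθ : θ ∈ Set.Ioo (0 : ℝ) (1/2))
    (c C c' : ℝ) (hc : 0 < c) (hC : 0 < C) (hc' : 0 < c')
    (hgradlow : ∀ b ∈ Metric.ball (0 : H) r,
      c * (‖gradient g (b₀ b)‖ + ‖(bpm b : H)‖) ≤ ‖gradient E b‖)
    (hEupper : ∀ b ∈ Metric.ball (0 : H) r,
      |E b| ≤ |g (b₀ b)| + C * ‖(bpm b : H)‖ ^ 2)
    (hloja : ∀ v : K₀, |g v| ^ (1 - θ) ≤ c' * ‖gradient g v‖) :
    ∃ K > (0 : ℝ), ∃ ε > (0 : ℝ), ∀ b : H, ‖b‖ < ε →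
      |E b| ^ (1 - θ) ≤ K * ‖gradient E b‖ := by
  obtain ⟨hθ0, hθhalf⟩ := hθ
  -- continuity of the gradient near 0 gives a bound on `‖gradient E b‖`, hence on `‖bpm b‖`
  have hcontf : ContinuousOn (fderiv ℝ E) (Metric.ball (0 : H) r) :=
    hE.continuousOn_fderiv_of_isOpen Metric.isOpen_ball (by norm_num)
  have hcont : ContinuousOn (gradient E) (Metric.ball (0 : H) r) := by
    have : gradient E = fun x => (InnerProductSpace.toDual ℝ H).symm (fderiv ℝ E x) := rfl
    rw [this]
    exact (InnerProductSpace.toDual ℝ H).symm.continuous.comp_continuousOn hcontf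
  have h0mem : (0 : H) ∈ Metric.ball (0 : H) r := by simpa using hr
  have hca : ContinuousAt (gradient E) 0 :=
    hcont.continuousAt (Metric.isOpen_ball.mem_nhds h0mem)
  obtain ⟨δ, hδ0, hδ⟩ := Metric.continuousAt_iff.mp hca 1 one_pos
  set M : ℝ := ‖gradient E 0‖ + 1 with hM
  have hMpos : 0 < M := by positivity
  set B : ℝ := max (M / c) 1 with hB
  have hB1 : (1 : ℝ) ≤ B := le_max_right _ _
  have hBpos : 0 < B := lt_of_lt_of_le one_pos hB1
  set K₁ : ℝ := max c' (C ^ (1 - θ) * B ^ (1 - 2 * θ)) with hK₁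
  have hK₁pos : 0 < K₁ := lt_of_lt_of_le hc' (le_max_left _ _)
  refine ⟨K₁ / c, by positivity, min r δ, lt_min hr hδ0, fun b hb => ?_⟩
  have hbr : b ∈ Metric.ball (0 : H) r := by
    simp only [Metric.mem_ball, dist_zero_right]
    exact lt_of_lt_of_le hb (min_le_left _ _)
  have hbδ : dist b 0 < δ := by
    rw [dist_zero_right]
    exact lt_of_lt_of_le hb (min_le_right _ _)
  -- bound on the gradient, hence on ‖bpm b‖
  have hgradM : ‖gradient E b‖ ≤ M := by
    have := hδ hbδ
    rw [dist_eq_norm] at this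
    have h2 := norm_sub_norm_le (gradient E b) (gradient E 0)
    rw [hM]; linarith
  have hw := hgradlow b hbr
  have hgnn : 0 ≤ ‖gradient g (b₀ b)‖ := norm_nonneg _
  have hwnn : 0 ≤ ‖(bpm b : H)‖ := norm_nonneg _
  have hwB : ‖(bpm b : H)‖ ≤ B := by
    have h1 : c * ‖(bpm b : H)‖ ≤ M := by nlinarith
    have : ‖(bpm b : H)‖ ≤ M / c := (le_div_iff₀ hc).mpr (by linarith [mul_comm c ‖(bpm b : H)‖ ▸ h1])
    exact this.trans (le_max_left _ _)
  -- key rpow manipulations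
  have h1θ : 0 ≤ 1 - θ := by linarith
  have h12θ : 0 ≤ 1 - 2 * θ := by linarith
  have step1 : |E b| ^ (1 - θ) ≤ (|g (b₀ b)| + C * ‖(bpm b : H)‖ ^ 2) ^ (1 - θ) :=
    Real.rpow_le_rpow (abs_nonneg _) (hEupper b hbr) h1θ
  have step2 : (|g (b₀ b)| + C * ‖(bpm b : H)‖ ^ 2) ^ (1 - θ) ≤
      |g (b₀ b)| ^ (1 - θ) + (C * ‖(bpm b : H)‖ ^ 2) ^ (1 - θ) :=
    real_rpow_add_le_add_rpow (abs_nonneg _) (by positivity) h1θ (by linarith)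
  have step3 : (C * ‖(bpm b : H)‖ ^ 2) ^ (1 - θ) =
      C ^ (1 - θ) * ‖(bpm b : H)‖ ^ (2 * (1 - θ)) := by
    rw [Real.mul_rpow hC.le (by positivity)]
    congr 1
    rw [← Real.rpow_natCast ‖(bpm b : H)‖ 2, ← Real.rpow_mul hwnn]
    norm_num
  have step4 : ‖(bpm b : H)‖ ^ (2 * (1 - θ)) ≤ B ^ (1 - 2 * θ) * ‖(bpm b : H)‖ := by
    rcases eq_or_lt_of_le hwnn with h0 | h0
    · rw [← h0, Real.zero_rpow (by linarith), mul_zero]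
    · have : ‖(bpm b : H)‖ ^ (2 * (1 - θ)) =
          ‖(bpm b : H)‖ ^ (1 - 2 * θ) * ‖(bpm b : H)‖ := by
        rw [show (2 * (1 - θ)) = (1 - 2 * θ) + 1 by ring, Real.rpow_add h0, Real.rpow_one]
      rw [this]
      exact mul_le_mul_of_nonneg_right
        (Real.rpow_le_rpow hwnn hwB h12θ) hwnn
  have hloja' := hloja (b₀ b)
  have hCB : 0 ≤ C ^ (1 - θ) * B ^ (1 - 2 * θ) := by positivity
  have key : |E b| ^ (1 - θ) ≤ K₁ * (‖gradient g (b₀ b)‖ + ‖(bpm b : H)‖) := by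
    have hc'K : c' ≤ K₁ := le_max_left _ _
    have hCBK : C ^ (1 - θ) * B ^ (1 - 2 * θ) ≤ K₁ := le_max_right _ _
    calc |E b| ^ (1 - θ) ≤ |g (b₀ b)| ^ (1 - θ) + (C * ‖(bpm b : H)‖ ^ 2) ^ (1 - θ) :=
          step1.trans step2
      _ ≤ c' * ‖gradient g (b₀ b)‖ +
            C ^ (1 - θ) * (B ^ (1 - 2 * θ) * ‖(bpm b : H)‖) := by
          rw [step3] at *
          have := mul_le_mul_of_nonneg_left step4 (Real.rpow_nonneg hC.le (1 - θ))
          linarith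
      _ ≤ K₁ * ‖gradient g (b₀ b)‖ + K₁ * ‖(bpm b : H)‖ := by
          have h1 : c' * ‖gradient g (b₀ b)‖ ≤ K₁ * ‖gradient g (b₀ b)‖ :=
            mul_le_mul_of_nonneg_right hc'K hgnn
          have h2 : C ^ (1 - θ) * (B ^ (1 - 2 * θ) * ‖(bpm b : H)‖) ≤ K₁ * ‖(bpm b : H)‖ := by
            rw [← mul_assoc]
            exact mul_le_mul_of_nonneg_right hCBK hwnn
          linarith
      _ = K₁ * (‖gradient g (b₀ b)‖ + ‖(bpm b : H)‖) := by ring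
  calc |E b| ^ (1 - θ) ≤ K₁ * (‖gradient g (b₀ b)‖ + ‖(bpm b : H)‖) := key
    _ = (K₁ / c) * (c * (‖gradient g (b₀ b)‖ + ‖(bpm b : H)‖)) := by
        field_simp
    _ ≤ (K₁ / c) * ‖gradient E b‖ :=
        mul_le_mul_of_nonneg_left hw (by positivity)
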